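/- Let p = 8/100 and let ξ be a Bernoulli random variable with P(ξ = 1) = p = 1 - P(ξ = 0); set X₁ := ξ - p, B := √(p(1-p)), and let Z be a standard normal random variable. Then there exists a real z ≥ 0 such that |P(X₁ > B·z) - P(Z > z)| > 1.0135 · E|X₁|³ / ((1 + z³)·B³). Consequently, every constant c_ν for which the nonuniform Berry–Esseen bound |P(S > Bz) - P(Z > z)| ≤ c_ν·(Σᵢ E|Xᵢ|³/B³)/(1 + z³) holds for all finite sequences of independent zero-mean random variables X₁,…,Xₙ (with S := ΣᵢXᵢ, B := √(Σᵢ E Xᵢ²) > 0) and all z ≥ 0 must satisfy c_ν > 1.0135. -/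

import Mathlib

open MeasureTheory Filter Set ProbabilityTheory
open scoped Real Topology


noncomputable def Pz (x : ℝ) : ℝ := x⁻¹ - x⁻¹^3 + 3*x⁻¹^5 - 15*x⁻¹^7 + 105*x⁻¹^9

lemma tail_le {z : ℝ} (hz : 1 ≤ z) :
    (gaussianReal 0 1 (Set.Ioi z)).toReal
      ≤ Real.exp (-(z^2/2)) * Pz z / Real.sqrt (2*Real.pi) := by
  have hz0 : (0:ℝ) < z := lt_of_lt_of_le one_pos hz
  set f : ℝ → ℝ := fun x => -(Real.exp (-(x^2/2)) * Pz x) with hf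
  set f' : ℝ → ℝ := fun x => Real.exp (-(x^2/2)) * (1 + 945 * x⁻¹^10) with hf'
  have hderiv : ∀ x ∈ Ici z, HasDerivAt f (f' x) x := by
    intro x hx
    have hx0 : x ≠ 0 := by
      have : (1:ℝ) ≤ x := le_trans hz hx
      positivity
    have h1 : HasDerivAt (fun x : ℝ => -(x^2/2)) (-x) x := by
      refine (((hasDerivAt_pow 2 x).div_const 2).neg).congr_deriv ?_
      norm_num
    have h2 : HasDerivAt (fun x : ℝ => Real.exp (-(x^2/2))) (Real.exp (-(x^2/2)) * (-x)) x :=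
      h1.exp
    have hinv : HasDerivAt (fun x : ℝ => x⁻¹) (-(x^2)⁻¹) x := hasDerivAt_inv hx0
    have hP : HasDerivAt Pz
        ((-(x^2)⁻¹) - 3*x⁻¹^2*(-(x^2)⁻¹) + 3*(5*x⁻¹^4*(-(x^2)⁻¹)) - 15*(7*x⁻¹^6*(-(x^2)⁻¹))
          + 105*(9*x⁻¹^8*(-(x^2)⁻¹))) x := by
      unfold Pz
      exact ((((hinv.sub (hinv.pow 3)).add ((hinv.pow 5).const_mul 3)).sub
        ((hinv.pow 7).const_mul 15)).add ((hinv.pow 9).const_mul 105))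
    have := ((h2.mul hP).neg)
    refine this.congr_deriv ?_
    simp only [hf', Pz, inv_pow]
    field_simp
    ring
  have htend : Tendsto f atTop (𝓝 0) := by
    have hA : Tendsto (fun x : ℝ => Real.exp (-(x^2/2))) atTop (𝓝 0) := by
      apply Real.tendsto_exp_atBot.comp
      have h : Tendsto (fun x : ℝ => x^2/2) atTop atTop :=
        (tendsto_pow_atTop two_ne_zero).atTop_div_const (by norm_num)
      exact tendsto_neg_atBot_iff.mpr h
    have hc : Tendsto (fun u : ℝ => u - u^3 + 3*u^5 - 15*u^7 + 105*u^9) (𝓝 0) (𝓝 0) := by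
      have : Continuous (fun u : ℝ => u - u^3 + 3*u^5 - 15*u^7 + 105*u^9) := by continuity
      simpa using this.tendsto 0
    have hB : Tendsto Pz atTop (𝓝 0) := by
      have := hc.comp tendsto_inv_atTop_zero
      exact this
    have := (hA.mul hB).neg
    simpa [hf] using this
  have hbase : Integrable (fun x : ℝ => Real.exp (-(x^2/2))) volume := by
    have h := integrable_exp_neg_mul_sq (by norm_num : (0:ℝ) < 1/2)
    have : (fun x : ℝ => Real.exp (-(1/2) * x^2)) = fun x : ℝ => Real.exp (-(x^2/2)) := by
      funext x; ring_nf
    rwa [this] at h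
  have hmeasf' : Measurable f' := by
    rw [hf']
    fun_prop
  have hint : IntegrableOn f' (Ioi z) volume := by
    refine Integrable.mono' ((hbase.const_mul 946).integrableOn) hmeasf'.aestronglyMeasurable.restrict ?_
    filter_upwards [ae_restrict_mem measurableSet_Ioi] with x hx
    have hx1 : (1:ℝ) ≤ x := le_trans hz (le_of_lt hx)
    have hx0 : (0:ℝ) < x := lt_of_lt_of_le one_pos hx1
    have ht0 : (0:ℝ) ≤ x⁻¹^10 := by positivity
    have ht1 : x⁻¹^10 ≤ 1 := by
      have h1 : x⁻¹ ≤ 1 := by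
        rw [inv_le_one₀ hx0]; exact hx1
      exact pow_le_one₀ (by positivity) h1
    have hexp : (0:ℝ) < Real.exp (-(x^2/2)) := Real.exp_pos _
    rw [hf']
    simp only [Real.norm_eq_abs]
    rw [abs_of_nonneg (by nlinarith)]
    nlinarith
  have hFTC : ∫ x in Ioi z, f' x = 0 - f z :=
    integral_Ioi_of_hasDerivAt_of_tendsto
      (hderiv z self_mem_Ici).continuousAt.continuousWithinAt
      (fun x hx => hderiv x (mem_Ici.mpr (le_of_lt hx))) hint htend
  have hsqrt : (0:ℝ) < Real.sqrt (2*Real.pi) := Real.sqrt_pos.mpr (by positivity)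
  have hpdf : ∀ x : ℝ, gaussianPDFReal 0 1 x = Real.exp (-(x^2/2)) / Real.sqrt (2*Real.pi) := by
    intro x
    simp [gaussianPDFReal, div_eq_mul_inv, mul_comm]
  rw [gaussianReal_apply_eq_integral 0 one_ne_zero,
    ENNReal.toReal_ofReal (integral_nonneg fun x => gaussianPDFReal_nonneg 0 1 x)]
  have hmono : ∫ x in Ioi z, gaussianPDFReal 0 1 x
      ≤ ∫ x in Ioi z, f' x / Real.sqrt (2*Real.pi) := by
    refine setIntegral_mono_on ((integrable_gaussianPDFReal 0 1).integrableOn)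
      (hint.div_const _) measurableSet_Ioi ?_
    intro x hx
    rw [hpdf x, hf']
    have hx0 : (0:ℝ) < x := lt_of_lt_of_le one_pos (le_trans hz (le_of_lt hx))
    have ht0 : (0:ℝ) ≤ x⁻¹^10 := by positivity
    have hexp : (0:ℝ) < Real.exp (-(x^2/2)) := Real.exp_pos _
    have hle : Real.exp (-(x^2/2)) ≤ Real.exp (-(x^2/2)) * (1 + 945 * x⁻¹^10) := by
      nlinarith
    gcongr
  calc ∫ x in Ioi z, gaussianPDFReal 0 1 x ≤ ∫ x in Ioi z, f' x / Real.sqrt (2*Real.pi) := hmono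
    _ = (0 - f z) / Real.sqrt (2*Real.pi) := by rw [integral_div, hFTC]
    _ = Real.exp (-(z^2/2)) * Pz z / Real.sqrt (2*Real.pi) := by rw [hf]; ring_nf

lemma expz_le : Real.exp (-((33911649/10000000:ℝ)^2/2)) ≤ 0.0031827895 := by
  have hs : (0:ℝ) ≤ (33911649/10000000:ℝ)^2/16 := by positivity
  have hT : (2.0518666:ℝ) ≤ Real.exp ((33911649/10000000:ℝ)^2/16) := by
    refine le_trans ?_ (Real.sum_le_exp_of_nonneg hs 12)
    rw [show (12:ℕ) = 11+1 from rfl]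
    simp only [Finset.sum_range_succ, Finset.sum_range_zero]
    norm_num [Nat.factorial]
  have h8 : Real.exp (-((33911649/10000000:ℝ)^2/2))
      = (Real.exp ((33911649/10000000:ℝ)^2/16))⁻¹^8 := by
    rw [← Real.exp_neg, ← Real.exp_nat_mul]
    norm_num
  rw [h8]
  have hpos : (0:ℝ) < 2.0518666 := by norm_num
  have hinv : (Real.exp ((33911649/10000000:ℝ)^2/16))⁻¹ ≤ (2.0518666:ℝ)⁻¹ :=
    inv_anti₀ hpos hT
  calc (Real.exp ((33911649/10000000:ℝ)^2/16))⁻¹^8 ≤ ((2.0518666:ℝ)⁻¹)^8 := by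
        gcongr
    _ ≤ 0.0031827895 := by norm_num

lemma sqrt2pi_ge : (2.506628:ℝ) ≤ Real.sqrt (2*Real.pi) := by
  have hpi : (3.141592:ℝ) < Real.pi := Real.pi_gt_d6
  rw [show (2.506628:ℝ) = Real.sqrt (2.506628^2) by
    rw [Real.sqrt_sq (by norm_num)]]
  apply Real.sqrt_le_sqrt
  nlinarith

lemma tailnum : (gaussianReal 0 1 (Set.Ioi (33911649/10000000:ℝ))).toReal ≤ 0.00034892 := by
  have h := tail_le (z := 33911649/10000000) (by norm_num)
  have hPz : Pz (33911649/10000000:ℝ) = ((33911649/10000000:ℝ)⁻¹ - (33911649/10000000:ℝ)⁻¹^3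
      + 3*(33911649/10000000:ℝ)⁻¹^5 - 15*(33911649/10000000:ℝ)⁻¹^7
      + 105*(33911649/10000000:ℝ)⁻¹^9) := rfl
  have hPnn : (0:ℝ) ≤ Pz (33911649/10000000:ℝ) := by rw [hPz]; norm_num
  have hs : (0:ℝ) < Real.sqrt (2*Real.pi) := lt_of_lt_of_le (by norm_num) sqrt2pi_ge
  refine le_trans h ?_
  have e1 : Real.exp (-((33911649/10000000:ℝ)^2/2)) * Pz (33911649/10000000:ℝ)
      ≤ 0.0031827895 * Pz (33911649/10000000:ℝ) :=
    mul_le_mul_of_nonneg_right expz_le hPnn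
  have e2 : Real.exp (-((33911649/10000000:ℝ)^2/2)) * Pz (33911649/10000000:ℝ) / Real.sqrt (2*Real.pi)
      ≤ 0.0031827895 * Pz (33911649/10000000:ℝ) / Real.sqrt (2*Real.pi) :=
    (div_le_div_iff_of_pos_right hs).mpr e1
  have e3 : 0.0031827895 * Pz (33911649/10000000:ℝ) / Real.sqrt (2*Real.pi)
      ≤ 0.0031827895 * Pz (33911649/10000000:ℝ) / 2.506628 :=
    div_le_div_of_nonneg_left (by positivity) (by norm_num) sqrt2pi_ge
  refine le_trans e2 (le_trans e3 ?_)
  rw [hPz]; norm_num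

lemma bern (Ω : Type) (mΩ : MeasurableSpace Ω) (μ : Measure Ω) (hμ : IsProbabilityMeasure μ)
    (ξ : Ω → ℝ) (hξ : Measurable ξ)
    (h1 : μ {ω | ξ ω = 1} = ENNReal.ofReal (8 / 100))
    (h0 : μ {ω | ξ ω = 0} = ENNReal.ofReal (1 - 8 / 100)) :
    ∃ z : ℝ, 0 ≤ z ∧
      1.0135 * (∫ ω, |ξ ω - 8 / 100| ^ 3 ∂μ)
          / ((1 + z ^ 3) * Real.sqrt ((8 / 100) * (1 - 8 / 100)) ^ 3)
        < |(μ {ω | Real.sqrt ((8 / 100) * (1 - 8 / 100)) * z < ξ ω - 8 / 100}).toReal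
            - (gaussianReal 0 1 (Set.Ioi z)).toReal| := by
  refine ⟨33911649/10000000, by norm_num, ?_⟩
  set z : ℝ := 33911649/10000000 with hzdef
  set A : Set Ω := {ω | ξ ω = 1} with hA
  set Bs : Set Ω := {ω | ξ ω = 0} with hBs
  have hAm : MeasurableSet A := hξ (measurableSet_singleton 1)
  have hBm : MeasurableSet Bs := hξ (measurableSet_singleton 0)
  have hdisj : Disjoint A Bs := by
    rw [Set.disjoint_left]
    intro ω hω1 hω0
    rw [hA, Set.mem_setOf_eq] at hω1
    rw [hBs, Set.mem_setOf_eq] at hω0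
    rw [hω1] at hω0
    norm_num at hω0
  have hU : μ (A ∪ Bs) = 1 := by
    rw [measure_union hdisj hBm, h1, h0, ← ENNReal.ofReal_add (by norm_num) (by norm_num)]
    norm_num
  have hcompl : μ ((A ∪ Bs)ᶜ) = 0 := by
    have hc := measure_compl (hAm.union hBm) (measure_ne_top μ _)
    rw [hU, measure_univ] at hc
    simpa using hc
  -- the square root
  set b : ℝ := Real.sqrt ((8 / 100) * (1 - 8 / 100)) with hbdef
  have hb2 : b ^ 2 = (8 / 100) * (1 - 8 / 100) := Real.sq_sqrt (by norm_num)
  have hbnn : 0 ≤ b := Real.sqrt_nonneg _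
  have hbl : 0.2712931 < b := by
    nlinarith [hb2, hbnn]
  have hBz : b * z < 92 / 100 := by
    nlinarith [hb2, hbnn]
  have hBz0 : 0 ≤ b * z := by positivity
  -- the event
  set S : Set Ω := {ω | b * z < ξ ω - 8 / 100} with hS
  have hAS : A ⊆ S := by
    intro ω hω
    rw [hA, Set.mem_setOf_eq] at hω
    rw [hS, Set.mem_setOf_eq, hω]
    linarith
  have hSB : ∀ ω, ω ∈ S → ω ∉ Bs := by
    intro ω hωS hωB
    rw [hBs, Set.mem_setOf_eq] at hωB
    rw [hS, Set.mem_setOf_eq, hωB] at hωS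
    linarith
  have hμS : μ S = ENNReal.ofReal (8 / 100) := by
    refine le_antisymm ?_ ?_
    · have hsub : S ⊆ A ∪ (A ∪ Bs)ᶜ := by
        intro ω hω
        by_cases hωA : ω ∈ A
        · exact Or.inl hωA
        · refine Or.inr fun hωU => ?_
          rcases hωU with h | h
          · exact hωA h
          · exact hSB ω hω h
      calc μ S ≤ μ (A ∪ (A ∪ Bs)ᶜ) := measure_mono hsub
        _ ≤ μ A + μ ((A ∪ Bs)ᶜ) := measure_union_le _ _
        _ = μ A := by rw [hcompl, add_zero]
        _ = ENNReal.ofReal (8 / 100) := h1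
    · rw [← h1]
      exact measure_mono hAS
  have htoS : (μ S).toReal = 8 / 100 := by
    rw [hμS, ENNReal.toReal_ofReal (by norm_num)]
  -- the third absolute moment
  have hI : ∫ ω, |ξ ω - 8 / 100| ^ 3 ∂μ = 24518 / 390625 := by
    have hae : (fun ω => |ξ ω - 8 / 100| ^ 3)
        =ᵐ[μ] (fun ω => A.indicator (fun _ => ((92:ℝ) / 100) ^ 3) ω
            + Bs.indicator (fun _ => ((8:ℝ) / 100) ^ 3) ω) := by
      have hsub : {ω | ¬ (|ξ ω - 8 / 100| ^ 3
          = A.indicator (fun _ => ((92:ℝ) / 100) ^ 3) ω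
            + Bs.indicator (fun _ => ((8:ℝ) / 100) ^ 3) ω)} ⊆ (A ∪ Bs)ᶜ := by
        intro ω hω
        rw [Set.mem_setOf_eq] at hω
        intro hωU
        apply hω
        rcases hωU with h | h
        · have hω1 : ξ ω = 1 := h
          have hnB : ω ∉ Bs := by
            intro hB
            rw [hBs, Set.mem_setOf_eq, hω1] at hB
            norm_num at hB
          rw [Set.indicator_of_mem h, Set.indicator_of_notMem hnB, hω1]
          rw [show |(1:ℝ) - 8 / 100| = 92 / 100 by rw [abs_of_nonneg] <;> norm_num]
          norm_num
        · have hω0 : ξ ω = 0 := h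
          have hnA : ω ∉ A := by
            intro hA'
            rw [hA, Set.mem_setOf_eq, hω0] at hA'
            norm_num at hA'
          rw [Set.indicator_of_notMem hnA, Set.indicator_of_mem h, hω0]
          rw [show |(0:ℝ) - 8 / 100| = 8 / 100 by rw [abs_of_nonpos] <;> norm_num]
          norm_num
      exact measure_mono_null hsub hcompl
    rw [integral_congr_ae hae]
    rw [integral_add ((integrable_const _).indicator hAm) ((integrable_const _).indicator hBm)]
    rw [integral_indicator_const _ hAm, integral_indicator_const _ hBm, measureReal_def, measureReal_def, h1, h0,
      ENNReal.toReal_ofReal (by norm_num), ENNReal.toReal_ofReal (by norm_num)]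
    norm_num
  have hT : (gaussianReal 0 1 (Set.Ioi z)).toReal ≤ 0.00034892 := tailnum
  have hTnn : 0 ≤ (gaussianReal 0 1 (Set.Ioi z)).toReal := ENNReal.toReal_nonneg
  rw [hI, htoS]
  rw [abs_of_nonneg (by linarith)]
  have hb0 : 0 < b := lt_trans (by norm_num) hbl
  have hb3 : b ^ 3 = (8 / 100) * (1 - 8 / 100) * b := by
    rw [pow_succ, hb2]
  rw [hb3]
  have hd : 0 < (1 + z ^ 3) * ((8 / 100) * (1 - 8 / 100) * b) := by positivity
  rw [div_lt_iff₀ hd]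
  calc 1.0135 * (24518 / 390625)
      < (8 / 100 - 0.00034892) * ((1 + z ^ 3) * ((8 / 100) * (1 - 8 / 100) * 0.2712931)) := by
        rw [hzdef]; norm_num
    _ ≤ (8 / 100 - (gaussianReal 0 1 (Set.Ioi z)).toReal)
          * ((1 + z ^ 3) * ((8 / 100) * (1 - 8 / 100) * b)) := by
        have hz3 : (0:ℝ) < 1 + z ^ 3 := by rw [hzdef]; norm_num
        gcongr <;> linarith [hbl]

noncomputable def muc : Measure ℝ :=
  ENNReal.ofReal (8/100) • Measure.dirac 1 + ENNReal.ofReal (1 - 8/100) • Measure.dirac 0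

lemma integrable_dirac'' {f : ℝ → ℝ} (hf : Measurable f) (a : ℝ) :
    Integrable f (Measure.dirac a) := by
  refine ⟨hf.aestronglyMeasurable, ?_⟩
  rw [HasFiniteIntegral, lintegral_dirac]
  exact ENNReal.coe_lt_top

lemma muc_integrable {f : ℝ → ℝ} (hf : Measurable f) : Integrable f muc := by
  unfold muc
  exact (((integrable_dirac'' hf 1).smul_measure ENNReal.ofReal_ne_top).add_measure
    ((integrable_dirac'' hf 0).smul_measure ENNReal.ofReal_ne_top))

lemma muc_integral {f : ℝ → ℝ} (hf : Measurable f) :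
    ∫ x, f x ∂muc = (8/100) * f 1 + (1 - 8/100) * f 0 := by
  unfold muc
  rw [integral_add_measure ((integrable_dirac'' hf 1).smul_measure ENNReal.ofReal_ne_top)
    ((integrable_dirac'' hf 0).smul_measure ENNReal.ofReal_ne_top),
    integral_smul_measure, integral_smul_measure, integral_dirac, integral_dirac,
    ENNReal.toReal_ofReal (by norm_num), ENNReal.toReal_ofReal (by norm_num)]
  simp [smul_eq_mul]

instance muc_prob : IsProbabilityMeasure muc := by
  constructor
  unfold muc
  simp only [Measure.add_apply, Measure.smul_apply, smul_eq_mul, measure_univ, mul_one]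
  rw [← ENNReal.ofReal_add (by norm_num) (by norm_num)]
  norm_num

lemma muc_one : muc {ω | ω = 1} = ENNReal.ofReal (8/100) := by
  have h : {ω : ℝ | ω = 1} = {(1:ℝ)} := Set.setOf_eq_eq_singleton
  unfold muc
  rw [h]
  simp only [Measure.add_apply, Measure.smul_apply, smul_eq_mul]
  rw [Measure.dirac_apply' _ (measurableSet_singleton _),
    Measure.dirac_apply' _ (measurableSet_singleton _)]
  simp

lemma muc_zero : muc {ω | ω = 0} = ENNReal.ofReal (1 - 8/100) := by
  have h : {ω : ℝ | ω = 0} = {(0:ℝ)} := Set.setOf_eq_eq_singleton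
  unfold muc
  rw [h]
  simp only [Measure.add_apply, Measure.smul_apply, smul_eq_mul]
  rw [Measure.dirac_apply' _ (measurableSet_singleton _),
    Measure.dirac_apply' _ (measurableSet_singleton _)]
  simp

/-- Lower bound on the nonuniform Berry--Esseen constant. First part: for `p = 8/100`, a
Bernoulli(`p`) variable `ξ`, `X₁ = ξ - p` and `B = √(p(1-p))`, there is a real `z ≥ 0` with
`|P(X₁ > Bz) - P(Z > z)| > 1.0135 E|X₁|³/((1+z³) B³)`. Second part: consequently, any constant
`c` for which the nonuniform Berry--Esseen bound
`|P(S > Bz) - P(Z > z)| ≤ c (∑ᵢ E|Xᵢ|³/B³)/(1+z³)` holds for all finite sequences of independent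
zero-mean random variables (with `B = √(∑ᵢ E Xᵢ²) > 0`) and all `z ≥ 0` satisfies
`c > 1.0135`. -/
theorem stmt19 :
    (∀ (Ω : Type) (mΩ : MeasurableSpace Ω) (μ : Measure Ω), IsProbabilityMeasure μ →
      ∀ ξ : Ω → ℝ, Measurable ξ →
      μ {ω | ξ ω = 1} = ENNReal.ofReal (8 / 100) →
      μ {ω | ξ ω = 0} = ENNReal.ofReal (1 - 8 / 100) →
      ∃ z : ℝ, 0 ≤ z ∧
        1.0135 * (∫ ω, |ξ ω - 8 / 100| ^ 3 ∂μ)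
            / ((1 + z ^ 3) * Real.sqrt ((8 / 100) * (1 - 8 / 100)) ^ 3)
          < |(μ {ω | Real.sqrt ((8 / 100) * (1 - 8 / 100)) * z < ξ ω - 8 / 100}).toReal
              - (gaussianReal 0 1 (Set.Ioi z)).toReal|) ∧
    (∀ c : ℝ,
      (∀ (Ω : Type) (mΩ : MeasurableSpace Ω) (μ : Measure Ω), IsProbabilityMeasure μ →
        ∀ (n : ℕ) (X : Fin n → Ω → ℝ),
        (∀ i, Measurable (X i)) →
        iIndepFun X μ →
        (∀ i, Integrable (X i) μ) →
        (∀ i, ∫ ω, X i ω ∂μ = 0) →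
        (∀ i, Integrable (fun ω => (X i ω) ^ 2) μ) →
        (∀ i, Integrable (fun ω => |X i ω| ^ 3) μ) →
        0 < Real.sqrt (∑ i, ∫ ω, (X i ω) ^ 2 ∂μ) →
        ∀ z : ℝ, 0 ≤ z →
          |(μ {ω | Real.sqrt (∑ i, ∫ ω', (X i ω') ^ 2 ∂μ) * z < ∑ i, X i ω}).toReal
              - (gaussianReal 0 1 (Set.Ioi z)).toReal|
            ≤ c * ((∑ i, ∫ ω, |X i ω| ^ 3 ∂μ)
                    / Real.sqrt (∑ i, ∫ ω, (X i ω) ^ 2 ∂μ) ^ 3)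
                / (1 + z ^ 3)) →
      1.0135 < c) := by
  refine ⟨bern, ?_⟩
  intro c h
  obtain ⟨z, hz0, hlt⟩ := bern ℝ inferInstance muc muc_prob id measurable_id muc_one muc_zero
  simp only [id_eq] at hlt
  have h2 : (∫ ω, (ω - 8/100)^2 ∂muc) = (8/100) * (1 - 8/100) := by
    rw [muc_integral (by fun_prop)]
    norm_num
  have hbe := h ℝ inferInstance muc muc_prob 1 (fun _ => fun ω => ω - 8/100)
    (fun i => by fun_prop)
    (iIndepFun.of_subsingleton)
    (fun i => muc_integrable (by fun_prop))
    (fun i => by rw [muc_integral (by fun_prop)]; norm_num)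
    (fun i => muc_integrable (by fun_prop))
    (fun i => muc_integrable (by fun_prop))
    (by simp only [Fin.sum_univ_one]; rw [h2]; exact Real.sqrt_pos.mpr (by norm_num))
    z hz0
  simp only [Fin.sum_univ_one] at hbe
  rw [h2] at hbe
  set b : ℝ := Real.sqrt ((8/100) * (1 - 8/100)) with hbdef
  have hbpos : 0 < b := Real.sqrt_pos.mpr (by norm_num)
  have hIval : (∫ ω, |ω - 8/100|^3 ∂muc) = 24518/390625 := by
    rw [muc_integral (by fun_prop)]
    rw [show |(1:ℝ) - 8/100| = 92/100 by rw [abs_of_nonneg] <;> norm_num]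
    rw [show |(0:ℝ) - 8/100| = 8/100 by rw [abs_of_nonpos] <;> norm_num]
    norm_num
  rw [hIval] at hlt hbe
  have hs : (0:ℝ) < (24518/390625) / ((1 + z^3) * b^3) := by positivity
  have hchain : 1.0135 * ((24518/390625) / ((1 + z^3) * b^3))
      < c * ((24518/390625) / ((1 + z^3) * b^3)) := by
    calc 1.0135 * ((24518/390625) / ((1 + z^3) * b^3))
        = 1.0135 * (24518/390625) / ((1 + z^3) * b^3) := by ring
      _ < _ := hlt
      _ ≤ c * ((24518/390625) / b^3) / (1 + z^3) := hbe
      _ = c * ((24518/390625) / ((1 + z^3) * b^3)) := by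
          have hz3 : (0:ℝ) < 1 + z^3 := by positivity
          field_simp
  exact (mul_lt_mul_iff_of_pos_right hs).mp hchain
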